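/- Let W be the cubic surface X1^2 X3 = X0^3 + (a X2 + b X3) X0 X3 + (c X2^2 + d X2 X3 + e X3^2) with c ≠ 0 and a ≠ 0, over an algebraically closed field of characteristic 0. After the explicit linear change of coordinates given by (X0,X1,X2,X3) ↦ ((2√c/a)(X0 - (d/(2√c))X1 - X2), (1/2)(-X2 + X3), (1/(2√c))(X2 + X3), X1), the defining polynomial becomes X0 X1 X3 + G(X0, X1, X2) where G is a cubic form with G(0,0,1) = -8c√c/a^3 ≠ 0. -/

import Mathlib

open MvPolynomial

set_option maxHeartbeats 2000000

private lemma term_supported {K : Type*} [Field K] (k : K) (i j l : ℕ) :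
    (C k * X 0 ^ i * X 1 ^ j * X 2 ^ l : MvPolynomial (Fin 4) K) ∈
      MvPolynomial.supported K ({0, 1, 2} : Set (Fin 4)) := by
  refine Subalgebra.mul_mem _ (Subalgebra.mul_mem _ (Subalgebra.mul_mem _ ?_ ?_) ?_) ?_
  · simpa [MvPolynomial.algebraMap_eq] using Subalgebra.algebraMap_mem (MvPolynomial.supported K ({0, 1, 2} : Set (Fin 4))) k
  · exact Subalgebra.pow_mem _ (X_mem_supported.mpr (by simp)) i
  · exact Subalgebra.pow_mem _ (X_mem_supported.mpr (by simp)) j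
  · exact Subalgebra.pow_mem _ (X_mem_supported.mpr (by simp)) l

private lemma term_hom {K : Type*} [Field K] (k : K) (i j l : ℕ) (h : i + j + l = 3) :
    (C k * X 0 ^ i * X 1 ^ j * X 2 ^ l : MvPolynomial (Fin 4) K).IsHomogeneous 3 := by
  have := (((isHomogeneous_C (Fin 4) k).mul ((isHomogeneous_X K 0).pow i)).mul
    ((isHomogeneous_X K 1).pow j)).mul ((isHomogeneous_X K 2).pow l)
  convert this using 1
  omega

/-- for the cubic surface `W : X1² X3 = X0³ + (a X2 + b X3) X0 X3 +
(c X2² + d X2 X3 + e X3²) X3` with `a ≠ 0` and `c ≠ 0`, after the linear change of coordinates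
`(X0,X1,X2,X3) ↦ ((2√c/a)(X0 − (d/(2√c))X1 − X2), (1/2)(−X2 + X3), (1/(2√c))(X2 + X3), X1)`
the defining polynomial becomes `X0 X1 X3 + G(X0, X1, X2)` where `G` is a cubic form in
`X0, X1, X2` with `G(0,0,1) = −8c√c/a³ ≠ 0`. -/
theorem stmt_7 (K : Type*) [Field K] [IsAlgClosed K] [CharZero K]
    (a b c d e s : K) (ha : a ≠ 0) (hc : c ≠ 0) (hs : s ^ 2 = c)
    (F : MvPolynomial (Fin 4) K)
    (hF : F = X 0 ^ 3 + (C a * X 2 + C b * X 3) * X 0 * X 3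
      + (C c * X 2 ^ 2 + C d * X 2 * X 3 + C e * X 3 ^ 2) * X 3 - X 1 ^ 2 * X 3)
    (σ : Fin 4 → MvPolynomial (Fin 4) K)
    (hσ : σ = ![C (2 * s / a) * (X 0 - C (d / (2 * s)) * X 1 - X 2),
        C (2⁻¹ : K) * (-X 2 + X 3), C (1 / (2 * s)) * (X 2 + X 3), X 1]) :
    ∃ G : MvPolynomial (Fin 4) K,
      G ∈ MvPolynomial.supported K ({0, 1, 2} : Set (Fin 4)) ∧
      G.IsHomogeneous 3 ∧
      aeval σ F = X 0 * X 1 * X 3 + G ∧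
      eval (fun i => if i = 2 then (1 : K) else 0) G = -8 * c * s / a ^ 3 ∧
      (-8 * c * s / a ^ 3 : K) ≠ 0 := by
  have hs0 : s ≠ 0 := by
    intro h; apply hc; rw [← hs, h]; ring
  refine ⟨C (8 * c * s / a ^ 3) * X 0 ^ 3 * X 1 ^ 0 * X 2 ^ 0
      + C (-12 * c * d / a ^ 3) * X 0 ^ 2 * X 1 ^ 1 * X 2 ^ 0
      + C (-24 * c * s / a ^ 3) * X 0 ^ 2 * X 1 ^ 0 * X 2 ^ 1
      + C (6 * d ^ 2 * s / a ^ 3 + 2 * b * s / a) * X 0 ^ 1 * X 1 ^ 2 * X 2 ^ 0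
      + C (24 * c * d / a ^ 3 + 1) * X 0 ^ 1 * X 1 ^ 1 * X 2 ^ 1
      + C (24 * c * s / a ^ 3) * X 0 ^ 1 * X 1 ^ 0 * X 2 ^ 2
      + C (-(d ^ 3 / a ^ 3) - b * d / a + e) * X 0 ^ 0 * X 1 ^ 3 * X 2 ^ 0
      + C (-(6 * d ^ 2 * s / a ^ 3 + 2 * b * s / a)) * X 0 ^ 0 * X 1 ^ 2 * X 2 ^ 1
      + C (-12 * c * d / a ^ 3 - 1) * X 0 ^ 0 * X 1 ^ 1 * X 2 ^ 2
      + C (-8 * c * s / a ^ 3) * X 0 ^ 0 * X 1 ^ 0 * X 2 ^ 3, ?_, ?_, ?_, ?_, ?_⟩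
  · refine Subalgebra.add_mem _ (Subalgebra.add_mem _ (Subalgebra.add_mem _
      (Subalgebra.add_mem _ (Subalgebra.add_mem _ (Subalgebra.add_mem _
      (Subalgebra.add_mem _ (Subalgebra.add_mem _ (Subalgebra.add_mem _
      (term_supported _ _ _ _) (term_supported _ _ _ _)) (term_supported _ _ _ _))
      (term_supported _ _ _ _)) (term_supported _ _ _ _)) (term_supported _ _ _ _))
      (term_supported _ _ _ _)) (term_supported _ _ _ _)) (term_supported _ _ _ _))
      (term_supported _ _ _ _)
  · refine ((((((((((term_hom _ _ _ _ rfl).add (term_hom _ _ _ _ rfl)).add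
      (term_hom _ _ _ _ rfl)).add (term_hom _ _ _ _ rfl)).add
      (term_hom _ _ _ _ rfl)).add (term_hom _ _ _ _ rfl)).add
      (term_hom _ _ _ _ rfl)).add (term_hom _ _ _ _ rfl)).add
      (term_hom _ _ _ _ rfl)).add (term_hom _ _ _ _ rfl))
  · subst hF hσ
    apply MvPolynomial.funext
    intro x
    simp only [map_add, map_sub, map_mul, map_pow, map_neg, aeval_X, aeval_C,
      Matrix.cons_val_zero, Matrix.cons_val_one, Matrix.head_cons, Matrix.cons_val_two,
      Matrix.tail_cons, Matrix.cons_val_three, Matrix.head_fin_const,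
      MvPolynomial.algebraMap_eq, eval_add, eval_sub, eval_mul, eval_pow, eval_neg, eval_C, eval_X]
    have hcs : c = s ^ 2 := hs.symm
    subst hcs
    set x0 := x 0
    set x1 := x 1
    set x2 := x 2
    set x3 := x 3
    have hA : a * a⁻¹ = 1 := mul_inv_cancel₀ ha
    have hS : s * s⁻¹ = 1 := mul_inv_cancel₀ hs0
    simp only [div_eq_mul_inv, mul_inv, ← inv_pow, one_mul]
    linear_combination (((-1 : K) * s * s⁻¹ * x1 * x2 * x3 + (-1 : K) * s * s⁻¹ * x1 * x2 ^ 2 + s * s⁻¹ * x0 * x1 * x3 + s * s⁻¹ * x0 * x1 * x2 + (-1/2 : K) * d * s * s⁻¹ ^ 2 * x1 ^ 2 * x3 + (-1/2 : K) * d * s * s⁻¹ ^ 2 * x1 ^ 2 * x2)) * hA + (((1/4 : K) * x1 * x3 ^ 2 + (-1/2 : K) * x1 * x2 * x3 + (-3/4 : K) * x1 * x2 ^ 2 + x0 * x1 * x3 + x0 * x1 * x2 + (1/4 : K) * s * s⁻¹ * x1 * x3 ^ 2 + (1/2 : K) * s * s⁻¹ * x1 * x2 * x3 + (1/4 : K)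 * s * s⁻¹ * x1 * x2 ^ 2 + (-1/2 : K) * d * s⁻¹ * x1 ^ 2 * x3 + (-1/2 : K) * d * s⁻¹ * x1 ^ 2 * x2 + (-1 : K) * a⁻¹ * b * d * x1 ^ 3 + (-12 : K) * a⁻¹ ^ 3 * d * s ^ 2 * x1 * x2 ^ 2 + (24 : K) * a⁻¹ ^ 3 * d * s ^ 2 * x0 * x1 * x2 + (-12 : K) * a⁻¹ ^ 3 * d * s ^ 2 * x0 ^ 2 * x1 + (-6 : K) * a⁻¹ ^ 3 * d ^ 2 * s * x1 ^ 2 * x2 + (6 : K) * a⁻¹ ^ 3 * d ^ 2 * s * x0 * x1 ^ 2 + (-6 : K) * a⁻¹ ^ 3 * d ^ 2 * s ^ 2 * s⁻¹ * x1 ^ 2 * x2 + (6 : K) * a⁻¹ ^ 3 * d ^ 2 * s ^ 2 * s⁻¹ * x0 * x1 ^ 2 + (-1 : K) * a⁻¹ ^ 3 * d ^ 3 * x1 ^ 3 + (-1 : K) * a⁻¹ ^ 3 * d ^ 3 * s * s⁻¹ * x1 ^ 3 + (-1 : K) * a⁻¹ ^ 3 * d ^ 3 * s ^ 2 * s⁻¹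 ^ 2 * x1 ^ 3)) * hS
  · simp [eval_add, eval_mul, eval_pow, eval_C, eval_X]
  · have h8 : (-8 : K) ≠ 0 := by norm_num
    exact div_ne_zero (mul_ne_zero (mul_ne_zero h8 hc) hs0) (pow_ne_zero _ ha)
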